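/- Let n_1,…,n_k ∈ ℕ and let P be the amalgamated sum (pushout) of monoids (ℕ^k × ℤ) +_ℕ (ℕ^k × ℤ) along the maps ℕ → ℕ^k × ℤ sending 1 to ((n_i)_i, 1) on both sides. Then the dual monoid Hom(P, ℕ) is isomorphic to {(a, b) ∈ ℕ^k × ℕ^k : ∑_i n_i a_i = ∑_i n_i b_i}. -/

import Mathlib

private lemma int_part_zero (k : ℕ) (φ : ((Fin k → ℕ) × ℤ) →+ ℕ) (m : ℤ) :
    φ (0, m) = 0 := by
  set g : ℤ →+ ℕ := φ.comp (AddMonoidHom.inr _ _) with hg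
  have h0 : g 1 + g (-1) = 0 := by
    rw [← map_add]; simp
  have h1 : g 1 = 0 := (Nat.add_eq_zero.mp h0).1
  have h1' : g (-1) = 0 := (Nat.add_eq_zero.mp h0).2
  have hnat : ∀ j : ℕ, g (j : ℤ) = 0 := by
    intro j
    have : ((j : ℤ)) = j • (1 : ℤ) := by simp
    rw [this, map_nsmul, h1, smul_zero]
  have hneg : ∀ j : ℕ, g (-(j : ℤ)) = 0 := by
    intro j
    have : (-(j : ℤ)) = j • (-1 : ℤ) := by simp
    rw [this, map_nsmul, h1', smul_zero]
  have : φ (0, m) = g m := rfl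
  rw [this]
  rcases le_or_gt 0 m with h | h
  · obtain ⟨j, rfl⟩ := Int.eq_ofNat_of_zero_le h
    exact hnat j
  · obtain ⟨j, rfl⟩ : ∃ j : ℕ, m = -(j : ℤ) := ⟨m.natAbs, by omega⟩
    exact hneg j

private lemma hom_eval (k : ℕ) (φ : ((Fin k → ℕ) × ℤ) →+ ℕ) (a : Fin k → ℕ) (m : ℤ) :
    φ (a, m) = ∑ i, a i * φ (Pi.single i 1, 0) := by
  have : (a, m) = (a, (0:ℤ)) + (0, m) := by simp
  rw [this, map_add, int_part_zero, add_zero]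
  have ha : (a, (0:ℤ)) = ∑ i, ((Pi.single i (a i) : Fin k → ℕ), (0:ℤ)) := by
    ext j
    · rw [Prod.fst_sum]
      simpa using congrFun (Finset.univ_sum_single a).symm j
    · rw [Prod.snd_sum]; simp
  rw [ha, map_sum]
  refine Finset.sum_congr rfl fun i _ => ?_
  have : ((Pi.single i (a i) : Fin k → ℕ), (0:ℤ)) = a i • ((Pi.single i 1 : Fin k → ℕ), (0:ℤ)) := by
    ext j
    · by_cases h : j = i <;> simp [h, Pi.single_apply]
    · simp
  rw [this, map_nsmul, smul_eq_mul]

private def homOf (k : ℕ) (a : Fin k → ℕ) : ((Fin k → ℕ) × ℤ) →+ ℕ :=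
  { toFun := fun x => ∑ i, a i * x.1 i
    map_zero' := by simp
    map_add' := by
      intro x y
      simp [mul_add, Finset.sum_add_distrib] }

theorem dual_of_amalgamated_sum_general (k : ℕ) (n : Fin k → ℕ) :
    ∃ F : {p : (((Fin k → ℕ) × ℤ) →+ ℕ) × (((Fin k → ℕ) × ℤ) →+ ℕ) //
            p.1 (n, 1) = p.2 (n, 1)} ≃
          {ab : (Fin k → ℕ) × (Fin k → ℕ) //
            ∑ i, n i * ab.1 i = ∑ i, n i * ab.2 i},
      ∀ p, (F p).val =
        (fun i => p.val.1 ((Pi.single i 1 : Fin k → ℕ), 0),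
         fun i => p.val.2 ((Pi.single i 1 : Fin k → ℕ), 0)) := by
  refine ⟨{
    toFun := fun p => ⟨(fun i => p.val.1 ((Pi.single i 1 : Fin k → ℕ), 0),
        fun i => p.val.2 ((Pi.single i 1 : Fin k → ℕ), 0)), ?_⟩
    invFun := fun ab => ⟨(homOf k ab.val.1, homOf k ab.val.2), ?_⟩
    left_inv := ?_
    right_inv := ?_ }, fun p => rfl⟩
  · have h1 := hom_eval k p.val.1 n 1
    have h2 := hom_eval k p.val.2 n 1
    have := p.property
    simp only [h1, h2] at this
    simpa [mul_comm] using this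
  · have := ab.property
    simp only [homOf, AddMonoidHom.mk'_apply]
    simpa [mul_comm] using this
  · rintro ⟨⟨φ, ψ⟩, h⟩
    refine Subtype.ext (Prod.ext ?_ ?_) <;> ext x <;>
      simp only [homOf, AddMonoidHom.coe_mk, ZeroHom.coe_mk]
    · rw [show φ x = φ (x.1, x.2) from rfl, hom_eval k φ x.1 x.2]
      exact Finset.sum_congr rfl fun i _ => mul_comm _ _
    · rw [show ψ x = ψ (x.1, x.2) from rfl, hom_eval k ψ x.1 x.2]
      exact Finset.sum_congr rfl fun i _ => mul_comm _ _
  · rintro ⟨⟨a, b⟩, h⟩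
    refine Subtype.ext (Prod.ext ?_ ?_) <;> funext i <;>
      simp [homOf, Pi.single_apply, mul_comm]
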